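/- Let p > 2, q = p/(p-1), ε ∈ (0,1/2), δ = 2q(q-1)ε/85, and let Q be the Nazarov–Treil Bellman function. In the region Ω_b = {(ζ,η) ∈ ℝ²×ℝ² : |ζ|^p < |η|^q}, for |φ| ≤ φ_{p_ε} and all ω₁ ∈ ℝ²: ⟨(H₁(Q) + tan φ · I₁(Q))(ζ,η) ω₁, ω₁⟩ ≥ 2δ|η|^{2-q}|ω₁|², where H₁(Q) is the 2×2 Hessian block of Q in the ζ variables and I₁(Q) is the matrix [[∂²_{ζ₁ζ₂}Q, (∂²_{ζ₂ζ₂}Q - ∂²_{ζ₁ζ₁}Q)/2],[(∂²_{ζ₂ζ₂}Q - ∂²_{ζ₁ζ₁}Q)/2, -∂²_{ζ₁ζ₂}Q]]. -/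

import Mathlib

noncomputable section
open Real Matrix

def qexp (p : ℝ) : ℝ := p / (p - 1)

/-- The Nazarov–Treil Bellman function on `ℂ × ℂ ≅ ℝ² × ℝ²`. -/
def Q (p δ : ℝ) (ζ η : ℂ) : ℝ :=
  if ‖ζ‖ ^ p ≤ ‖η‖ ^ qexp p then
    ‖ζ‖ ^ p + ‖η‖ ^ qexp p +
      δ * (‖ζ‖ ^ (2 : ℝ) * ‖η‖ ^ (2 - qexp p))
  else
    ‖ζ‖ ^ p + ‖η‖ ^ qexp p +
      δ * ((2 / p) * ‖ζ‖ ^ p + (2 / qexp p - 1) * ‖η‖ ^ qexp p)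

/-- Coordinate directions in `ℂ ≅ ℝ²`. -/
def dir : Fin 2 → ℂ := ![1, Complex.I]

/-- Partial derivative of `Q` in the `i`-th coordinate of the `ζ` variable. -/
def dζ (p δ : ℝ) (i : Fin 2) (ζ η : ℂ) : ℝ :=
  deriv (fun t : ℝ => Q p δ (ζ + (t : ℂ) * dir i) η) 0

/-- Partial derivative of `Q` in the `i`-th coordinate of the `η` variable. -/
def dη (p δ : ℝ) (i : Fin 2) (ζ η : ℂ) : ℝ :=
  deriv (fun t : ℝ => Q p δ ζ (η + (t : ℂ) * dir i)) 0

/-- The `ζζ` block of the Hessian of `Q`: `(H₁)ᵢⱼ = ∂²_{ζᵢζⱼ} Q`. -/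
def H1 (p δ : ℝ) (ζ η : ℂ) : Matrix (Fin 2) (Fin 2) ℝ :=
  Matrix.of fun i j => deriv (fun s : ℝ => dζ p δ j (ζ + (s : ℂ) * dir i) η) 0

/-- The mixed `ζη` block of the Hessian of `Q`: `(H₂)ᵢⱼ = ∂²_{ζᵢηⱼ} Q`. -/
def H2 (p δ : ℝ) (ζ η : ℂ) : Matrix (Fin 2) (Fin 2) ℝ :=
  Matrix.of fun i j => deriv (fun s : ℝ => dη p δ j (ζ + (s : ℂ) * dir i) η) 0

/-- The `ηη` block of the Hessian of `Q`: `(H₃)ᵢⱼ = ∂²_{ηᵢηⱼ} Q`. -/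
def H3 (p δ : ℝ) (ζ η : ℂ) : Matrix (Fin 2) (Fin 2) ℝ :=
  Matrix.of fun i j => deriv (fun s : ℝ => dη p δ j ζ (η + (s : ℂ) * dir i)) 0

def I1 (p δ : ℝ) (ζ η : ℂ) : Matrix (Fin 2) (Fin 2) ℝ :=
  !![H1 p δ ζ η 0 1, (H1 p δ ζ η 1 1 - H1 p δ ζ η 0 0) / 2;
     (H1 p δ ζ η 1 1 - H1 p δ ζ η 0 0) / 2, -(H1 p δ ζ η 0 1)]

def I2 (p δ : ℝ) (ζ η : ℂ) : Matrix (Fin 2) (Fin 2) ℝ :=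
  (1 / 2 : ℝ) •
    !![H2 p δ ζ η 1 0 - H2 p δ ζ η 0 1, H2 p δ ζ η 0 0 + H2 p δ ζ η 1 1;
       -(H2 p δ ζ η 0 0) - H2 p δ ζ η 1 1, H2 p δ ζ η 1 0 - H2 p δ ζ η 0 1]

def I3 (p δ : ℝ) (ζ η : ℂ) : Matrix (Fin 2) (Fin 2) ℝ :=
  !![H3 p δ ζ η 0 1, (H3 p δ ζ η 1 1 - H3 p δ ζ η 0 0) / 2;
     (H3 p δ ζ η 1 1 - H3 p δ ζ η 0 0) / 2, -(H3 p δ ζ η 0 1)]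

open Filter in
lemma dir_norm (i : Fin 2) : (dir i).re ^ 2 + (dir i).im ^ 2 = 1 := by
  fin_cases i <;> simp [dir] <;> norm_num

lemma absp (w : ℂ) (r : ℝ) : ‖w‖ ^ r = Complex.normSq w ^ (r / 2) := by
  rw [Complex.norm_def, Real.sqrt_eq_rpow, ← Real.rpow_mul (Complex.normSq_nonneg w)]
  ring_nf

lemma normSq_line (w z : ℂ) (hz : z.re ^ 2 + z.im ^ 2 = 1) (t : ℝ) :
    Complex.normSq (w + (t : ℂ) * z)
      = Complex.normSq w + 2 * (w.re * z.re + w.im * z.im) * t + t ^ 2 := by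
  simp only [Complex.normSq_apply, Complex.add_re, Complex.add_im, Complex.re_ofReal_mul,
    Complex.im_ofReal_mul]
  linear_combination (t ^ 2) * hz

lemma re_line (w z : ℂ) (t : ℝ) : (w + (t : ℂ) * z).re = w.re + t * z.re := by
  simp
lemma im_line (w z : ℂ) (t : ℝ) : (w + (t : ℂ) * z).im = w.im + t * z.im := by
  simp

lemma ev_region (p : ℝ) (hp : 0 < p) (η w z : ℂ)
    (hb : ‖w‖ ^ p < ‖η‖ ^ qexp p) :
    ∀ᶠ t : ℝ in nhds 0, ‖w + (t : ℂ) * z‖ ^ p < ‖η‖ ^ qexp p := by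
  have h1 : Filter.Tendsto (fun t : ℝ => ‖w + (t : ℂ) * z‖) (nhds 0)
      (nhds (‖w‖)) := by
    have : Continuous fun t : ℝ => ‖w + (t : ℂ) * z‖ := by continuity
    simpa using this.tendsto 0
  have h2 := (Real.continuousAt_rpow_const (‖w‖) p (Or.inr hp.le)).tendsto.comp h1
  exact h2.eventually_lt_const hb

lemma dzeta_eq (p δ : ℝ) (hp : 2 < p) (η : ℂ) (j : Fin 2) (w : ℂ)
    (hb : ‖w‖ ^ p < ‖η‖ ^ qexp p) :
    dζ p δ j w η =
      p * Complex.normSq w ^ (p / 2 - 1) * (w.re * (dir j).re + w.im * (dir j).im)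
        + 2 * (δ * ‖η‖ ^ (2 - qexp p)) * (w.re * (dir j).re + w.im * (dir j).im) := by
  have hp0 : (0 : ℝ) < p := by linarith
  set c : ℝ := w.re * (dir j).re + w.im * (dir j).im with hc
  set D : ℝ := δ * ‖η‖ ^ (2 - qexp p) with hD
  set C : ℝ := ‖η‖ ^ qexp p with hC
  set N : ℝ := Complex.normSq w with hN
  have hev : (fun t : ℝ => Q p δ (w + (t : ℂ) * dir j) η) =ᶠ[nhds (0 : ℝ)]
      fun t => (N + 2 * c * t + t ^ 2) ^ (p / 2) + C + D * (N + 2 * c * t + t ^ 2) := by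
    filter_upwards [ev_region p hp0 η w (dir j) hb] with t ht
    rw [Q, if_pos ht.le, absp _ p, absp _ 2, normSq_line w (dir j) (dir_norm j) t]
    rw [show (2 : ℝ) / 2 = 1 by norm_num, Real.rpow_one]
    ring
  rw [dζ, hev.deriv_eq]
  have hu : HasDerivAt (fun t : ℝ => N + 2 * c * t + t ^ 2) (2 * c) 0 := by
    have h1 : HasDerivAt (fun t : ℝ => N + 2 * c * t) (2 * c) 0 := by
      simpa using ((hasDerivAt_id (0 : ℝ)).const_mul (2 * c)).const_add N
    have h2 : HasDerivAt (fun t : ℝ => N + 2 * c * t + t ^ 2) _ 0 := h1.add (hasDerivAt_pow 2 (0 : ℝ))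
    simpa using h2
  have hu0 : (fun t : ℝ => N + 2 * c * t + t ^ 2) 0 = N := by norm_num
  have hr : HasDerivAt (fun t : ℝ => (N + 2 * c * t + t ^ 2) ^ (p / 2))
      ((p / 2) * N ^ (p / 2 - 1) * (2 * c)) 0 := by
    have h := hu.rpow_const (p := p / 2) (Or.inr (by linarith : (1:ℝ) ≤ p / 2))
    norm_num at h
    convert h using 1
    ring
  have htot : HasDerivAt
      (fun t : ℝ => (N + 2 * c * t + t ^ 2) ^ (p / 2) + C + D * (N + 2 * c * t + t ^ 2))
      ((p / 2) * N ^ (p / 2 - 1) * (2 * c) + D * (2 * c)) 0 :=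
    (hr.add_const C).add (hu.const_mul D)
  rw [htot.deriv]; ring

lemma H1_eq (p δ : ℝ) (hp : 2 < p) (η : ℂ) (i j : Fin 2) (w : ℂ)
    (hb : ‖w‖ ^ p < ‖η‖ ^ qexp p) :
    H1 p δ w η i j =
      p * (p - 2) * Complex.normSq w ^ (p / 2 - 2)
          * (w.re * (dir i).re + w.im * (dir i).im)
          * (w.re * (dir j).re + w.im * (dir j).im)
        + (p * Complex.normSq w ^ (p / 2 - 1) + 2 * (δ * ‖η‖ ^ (2 - qexp p)))
          * ((dir i).re * (dir j).re + (dir i).im * (dir j).im) := by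
  have hp0 : (0 : ℝ) < p := by linarith
  set ci : ℝ := w.re * (dir i).re + w.im * (dir i).im with hci
  set cj : ℝ := w.re * (dir j).re + w.im * (dir j).im with hcj
  set k : ℝ := (dir i).re * (dir j).re + (dir i).im * (dir j).im with hk
  set D : ℝ := δ * ‖η‖ ^ (2 - qexp p) with hD
  set N : ℝ := Complex.normSq w with hN
  have hev : (fun s : ℝ => dζ p δ j (w + (s : ℂ) * dir i) η) =ᶠ[nhds (0 : ℝ)]
      fun s => p * ((N + 2 * ci * s + s ^ 2) ^ (p / 2 - 1) * (cj + k * s))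
        + 2 * D * (cj + k * s) := by
    filter_upwards [ev_region p hp0 η w (dir i) hb] with s hs
    rw [dzeta_eq p δ hp η j _ hs, normSq_line w (dir i) (dir_norm i) s,
      re_line, im_line]
    ring
  have Hdef : H1 p δ w η i j = deriv (fun s : ℝ => dζ p δ j (w + (s : ℂ) * dir i) η) 0 := rfl
  rw [Hdef, hev.deriv_eq]
  by_cases h0 : w = 0
  · -- at the origin
    subst h0
    have hN0 : N = 0 := by simp [hN]
    have hci0 : ci = 0 := by simp [hci]
    have hcj0 : cj = 0 := by simp [hcj]
    rw [hN0, hci0, hcj0]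
    have hcube : HasDerivAt (fun s : ℝ => (s ^ 2) ^ (p / 2 - 1) * s) 0 0 := by
      rw [hasDerivAt_iff_tendsto_slope]
      have hev2 : (fun s : ℝ => (s ^ 2) ^ (p / 2 - 1))
          =ᶠ[nhdsWithin (0 : ℝ) {(0 : ℝ)}ᶜ] slope (fun s : ℝ => (s ^ 2) ^ (p / 2 - 1) * s) 0 := by
        filter_upwards [self_mem_nhdsWithin] with s hs
        have hs0 : s ≠ 0 := hs
        rw [slope_def_field]
        field_simp
        ring
      have hcont : Filter.Tendsto (fun s : ℝ => (s ^ 2) ^ (p / 2 - 1))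
          (nhdsWithin (0 : ℝ) {(0 : ℝ)}ᶜ) (nhds 0) := by
        have h1 : ContinuousAt (fun s : ℝ => (s ^ 2) ^ (p / 2 - 1)) 0 :=
          ((continuous_pow 2).continuousAt).rpow_const (Or.inr (by linarith))
        have h3 : ((0:ℝ) ^ 2) ^ (p / 2 - 1) = 0 := by
          rw [show ((0:ℝ) ^ 2) = 0 by norm_num,
            Real.zero_rpow (by linarith : (0:ℝ) < p / 2 - 1).ne']
        have := h1.tendsto
        rw [h3] at this
        exact this.mono_left nhdsWithin_le_nhds
      exact hcont.congr' hev2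
    have htot : HasDerivAt
        (fun s : ℝ => p * (((0:ℝ) + 2 * 0 * s + s ^ 2) ^ (p / 2 - 1) * ((0:ℝ) + k * s))
          + 2 * D * ((0:ℝ) + k * s)) (p * 0 * k + 2 * D * k) 0 := by
      have e : (fun s : ℝ => p * (((0:ℝ) + 2 * 0 * s + s ^ 2) ^ (p / 2 - 1) * ((0:ℝ) + k * s))
          + 2 * D * ((0:ℝ) + k * s))
          = fun s : ℝ => (p * k) * ((s ^ 2) ^ (p / 2 - 1) * s) + (2 * D * k) * s := by
        funext s
        rw [show (0:ℝ) + 2 * 0 * s + s ^ 2 = s ^ 2 by ring]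
        ring
      rw [e]
      have h1 := (hcube.const_mul (p * k)).add ((hasDerivAt_id (0:ℝ)).const_mul (2 * D * k))
      have h2 : HasDerivAt (fun s : ℝ => (p * k) * ((s ^ 2) ^ (p / 2 - 1) * s) + (2 * D * k) * s) _ 0 := h1
      simpa using h2
    rw [htot.deriv]
    rw [Real.zero_rpow (by linarith : (0:ℝ) < p / 2 - 1).ne']
    ring
  · -- away from the origin
    have hN0 : N ≠ 0 := by
      simp only [hN]
      exact fun hc => h0 (Complex.normSq_eq_zero.mp hc)
    have hu : HasDerivAt (fun s : ℝ => N + 2 * ci * s + s ^ 2) (2 * ci) 0 := by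
      have h1 : HasDerivAt (fun s : ℝ => N + 2 * ci * s) (2 * ci) 0 := by
        simpa using ((hasDerivAt_id (0 : ℝ)).const_mul (2 * ci)).const_add N
      have h2 : HasDerivAt (fun s : ℝ => N + 2 * ci * s + s ^ 2) _ 0 := h1.add (hasDerivAt_pow 2 (0 : ℝ))
      simpa using h2
    have hr : HasDerivAt (fun s : ℝ => (N + 2 * ci * s + s ^ 2) ^ (p / 2 - 1))
        ((2 * ci) * (p / 2 - 1) * N ^ (p / 2 - 1 - 1)) 0 := by
      have h := hu.rpow_const (p := p / 2 - 1) (Or.inl (by simpa using hN0))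
      norm_num at h ⊢
      convert h using 2 <;> norm_num
    have hlin : HasDerivAt (fun s : ℝ => cj + k * s) k 0 := by
      simpa using ((hasDerivAt_id (0 : ℝ)).const_mul k).const_add cj
    have hmul := hr.mul hlin
    have htot := (hmul.const_mul p).add (hlin.const_mul (2 * D))
    have htot' : HasDerivAt (fun s : ℝ => p * ((N + 2 * ci * s + s ^ 2) ^ (p / 2 - 1) * (cj + k * s)) + 2 * D * (cj + k * s)) _ 0 := htot
    rw [htot'.deriv]
    norm_num
    rw [show p / 2 - 1 - 1 = p / 2 - 2 by ring]
    ring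

lemma tan_bound (p ε φ : ℝ) (hp : 2 < p) (hε0 : 0 < ε) (hε1 : ε < 1 / 2)
    (hφ : |φ| ≤ Real.arccos (1 - 2 / ((p - 2 * ε) / (1 - ε)))) :
    (p - 2) ^ 2 * Real.tan φ ^ 2 ≤ 4 * (p - 1) := by
  have h1ε : (0 : ℝ) < 1 - ε := by linarith
  set pe : ℝ := (p - 2 * ε) / (1 - ε) with hpe
  have hpe2 : 2 < pe := by
    rw [hpe, lt_div_iff₀ h1ε]; nlinarith
  set a : ℝ := 1 - 2 / pe with ha
  have hpe0 : (0 : ℝ) < pe := by linarith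
  have ha0 : 0 < a := by
    rw [ha, sub_pos, div_lt_one hpe0]; linarith
  have ha1 : a ≤ 1 := by
    rw [ha]; have : 0 < 2 / pe := by positivity
    linarith
  have hcos : a ≤ Real.cos φ := by
    have h2 := Real.cos_le_cos_of_nonneg_of_le_pi (abs_nonneg φ) (Real.arccos_le_pi a) hφ
    rw [Real.cos_arccos (by linarith) ha1, Real.cos_abs] at h2
    exact h2
  have hap : (p - 2) / p ≤ a := by
    have hpep : p ≤ pe := by
      rw [hpe, le_div_iff₀ h1ε]; nlinarith
    have h2 : 2 / pe ≤ 2 / p := by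
      apply div_le_div_of_nonneg_left (by norm_num) (by linarith) hpep
    have h3 : (p - 2) / p = 1 - 2 / p := by field_simp
    rw [ha, h3]; linarith
  have hp0 : (0 : ℝ) < p := by linarith
  have hcos0 : 0 < Real.cos φ := lt_of_lt_of_le ha0 hcos
  have hpc : p - 2 ≤ p * Real.cos φ := by
    rw [div_le_iff₀ hp0] at hap
    calc p - 2 ≤ a * p := hap
    _ ≤ Real.cos φ * p := by nlinarith
    _ = p * Real.cos φ := by ring
  have htc : Real.tan φ ^ 2 * Real.cos φ ^ 2 = 1 - Real.cos φ ^ 2 := by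
    rw [Real.tan_eq_sin_div_cos, div_pow]
    field_simp
    linarith [Real.sin_sq φ]
  have hc2 : (p - 2) ^ 2 ≤ p ^ 2 * Real.cos φ ^ 2 := by nlinarith
  nlinarith [sq_nonneg (Real.tan φ * Real.cos φ), mul_pos hcos0 hcos0,
    mul_nonneg (sq_nonneg (Real.tan φ)) (sq_nonneg (p - 2))]

lemma quad_key (p T X Y : ℝ) (hp : 2 < p) (hT : (p - 2) ^ 2 * T ^ 2 ≤ 4 * (p - 1)) :
    0 ≤ (p - 1) * X ^ 2 - (p - 2) * T * (X * Y) + Y ^ 2 := by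
  nlinarith [sq_nonneg (2 * (p - 1) * X - (p - 2) * T * Y),
    mul_nonneg (sub_nonneg.2 hT) (sq_nonneg Y)]


theorem stmt12 (p ε δ φ : ℝ) (hp : 2 < p) (hε : ε ∈ Set.Ioo (0 : ℝ) (1 / 2))
    (hδ : δ = 2 * qexp p * (qexp p - 1) * ε / 85)
    (hφ : |φ| ≤ Real.arccos (1 - 2 / ((p - 2 * ε) / (1 - ε))))
    (ζ η : ℂ) (hb : ‖ζ‖ ^ p < ‖η‖ ^ qexp p) (ω₁ : Fin 2 → ℝ) :
    2 * δ * ‖η‖ ^ (2 - qexp p) * (ω₁ ⬝ᵥ ω₁) ≤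
      ((H1 p δ ζ η + Real.tan φ • I1 p δ ζ η).mulVec ω₁) ⬝ᵥ ω₁ := by
  obtain ⟨hε0, hε1⟩ := hε
  have hT := tan_bound p ε φ hp hε0 hε1 hφ
  have e00 := H1_eq p δ hp η 0 0 ζ hb
  have e01 := H1_eq p δ hp η 0 1 ζ hb
  have e10 := H1_eq p δ hp η 1 0 ζ hb
  have e11 := H1_eq p δ hp η 1 1 ζ hb
  simp only [dir, Matrix.cons_val_zero, Matrix.cons_val_one, Matrix.head_cons,
    Complex.one_re, Complex.one_im, Complex.I_re, Complex.I_im, mul_one, mul_zero,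
    add_zero, zero_add, one_mul, zero_mul] at e00 e01 e10 e11
  set x : ℝ := ζ.re with hx
  set y : ℝ := ζ.im with hy
  set A : ℝ := Complex.normSq ζ ^ (p / 2 - 2) with hA
  set B : ℝ := Complex.normSq ζ ^ (p / 2 - 1) with hB
  set D : ℝ := δ * ‖η‖ ^ (2 - qexp p) with hD
  set T : ℝ := Real.tan φ with hTd
  have hA0 : 0 ≤ A := Real.rpow_nonneg (Complex.normSq_nonneg ζ) _
  have hxy : x ^ 2 + y ^ 2 = Complex.normSq ζ := by
    rw [Complex.normSq_apply]; ring
  have hBA : B = A * (x ^ 2 + y ^ 2) := by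
    rw [hxy]
    by_cases h0 : Complex.normSq ζ = 0
    · rw [hB, h0, Real.zero_rpow (by linarith : (0:ℝ) < p / 2 - 1).ne', mul_zero]
    · rw [hB, hA, show p / 2 - 1 = (p / 2 - 2) + 1 by ring, Real.rpow_add_one h0]
  have hp0 : (0 : ℝ) < p := by linarith
  have hQF := mul_nonneg (mul_nonneg hp0.le hA0)
    (quad_key p T (x * ω₁ 0 + y * ω₁ 1) (x * ω₁ 1 - y * ω₁ 0) hp hT)
  rw [mul_assoc 2 δ _, ← hD]
  simp only [Matrix.add_apply, Matrix.smul_apply, smul_eq_mul, Matrix.mulVec,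
    dotProduct, Fin.sum_univ_two, I1, Matrix.cons_val', Matrix.cons_val_zero,
    Matrix.cons_val_one, Matrix.head_cons, Matrix.head_fin_const, Matrix.empty_val',
    Matrix.cons_val_fin_one]
  rw [e00, e01, e10, e11, hBA]
  simp only [Matrix.of_apply, Matrix.cons_val', Matrix.cons_val_zero, Matrix.cons_val_one,
    Matrix.head_cons, Matrix.empty_val', Matrix.cons_val_fin_one, Matrix.head_fin_const]
  nlinarith [hQF]
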